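/- Let k be a field of characteristic zero and K/k a field extension. For x ∈ K, the Kähler differential dx = 0 in Ω¹_{K|k} if and only if x is algebraic over k. -/

import Mathlib

open TrivSqZeroExt in
theorem Derivation.exists_extend {R : Type*} {A B : Type u} [CommRing R] [CommRing A] [CommRing B]
    [Algebra R A] [Algebra R B] [Algebra A B] [IsScalarTower R A B]
    [Algebra.FormallySmooth A B] (d : Derivation R A B) :
    ∃ D : Derivation R B B, ∀ a : A, D (algebraMap A B a) = d a := by
  classical
  set C := DualNumber B with hC
  -- the square-zero ideal
  let I : Ideal C := RingHom.ker (fstHom B B B).toRingHom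
  have hmem : ∀ z : C, z ∈ I ↔ z.fst = 0 := fun z => Iff.rfl
  have hI : I ^ 2 = ⊥ := by
    rw [pow_two]
    refine le_antisymm (Ideal.mul_le.mpr fun a ha b hb => ?_) bot_le
    rw [hmem] at ha hb
    rw [Ideal.mem_bot]
    ext
    · rw [fst_mul, ha, zero_mul]; rfl
    · rw [snd_mul, ha, hb]; simp
  -- the inclusion of B as the ideal I, as an A-linear map
  let ι : B →ₗ[A] I :=
    LinearMap.codRestrict (I.restrictScalars A) ((inrHom B B).restrictScalars A)
      (fun b => by rw [Submodule.restrictScalars_mem, hmem]; simp)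
  -- the R-derivation A → I
  let d' : Derivation R A I := ι.compDer (d : Derivation R A B)
  -- the twisted algebra map A → C
  let f0 : A →ₐ[R] C := liftOfDerivationToSquareZero I hI d'
  have hf0 : ∀ a : A, f0 a = inr (d a) + inl (algebraMap A B a) := fun a => by
    show (d' a : C) + algebraMap A C a = _
    rw [TrivSqZeroExt.algebraMap_eq_inl']
    rfl
  have hf0fst : ∀ a : A, fst (f0 a) = algebraMap A B a := fun a => by
    rw [hf0, fst_add, fst_inr, fst_inl, zero_add]
  have hf0snd : ∀ a : A, snd (f0 a) = d a := fun a => by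
    rw [hf0, snd_add, snd_inr, snd_inl, add_zero]
  letI : Algebra A C := f0.toRingHom.toAlgebra
  have halg : ∀ a : A, algebraMap A C a = f0 a := fun a => rfl
  -- the projection C → B as an A-algebra hom (twisted structure)
  let g : C →ₐ[A] B :=
    { toRingHom := (fstHom B B B).toRingHom
      commutes' := fun a => by rw [halg]; exact hf0fst a }
  have hgsurj : Function.Surjective g := fun b => ⟨inl b, rfl⟩
  have hgker : IsNilpotent (RingHom.ker (g : C →+* B)) := ⟨2, hI⟩
  -- lift the identity along g
  let F : B →ₐ[A] C := Algebra.FormallySmooth.liftOfSurjective (AlgHom.id A B) g hgsurj hgker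
  have hfst : ∀ b : B, fst (F b) = b := fun b =>
    Algebra.FormallySmooth.liftOfSurjective_apply (AlgHom.id A B) g hgsurj hgker b
  have hFA : ∀ a : A, F (algebraMap A B a) = f0 a := fun a => F.commutes a
  have hFr : ∀ r : R, F (algebraMap R B r) = inl (algebraMap R B r) := fun r => by
    rw [IsScalarTower.algebraMap_apply R A B, hFA, ← halg,
      ← IsScalarTower.algebraMap_apply R A C, TrivSqZeroExt.algebraMap_eq_inl',
      ← IsScalarTower.algebraMap_apply R A B]
  -- the extended derivation
  refine ⟨{ toFun := fun b => snd (F b)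
            map_add' := fun b₁ b₂ => by
              show snd (F (b₁ + b₂)) = snd (F b₁) + snd (F b₂)
              rw [map_add, snd_add]
            map_smul' := fun r b => by
              show snd (F (r • b)) = r • snd (F b)
              rw [Algebra.smul_def, map_mul, hFr, snd_mul]
              simp [Algebra.smul_def]
            map_one_eq_zero' := by
              show snd (F 1) = 0
              rw [map_one]; simp
            leibniz' := fun a b => by
              show snd (F (a * b)) = a • snd (F b) + b • snd (F a)
              rw [map_mul, snd_mul, hfst, hfst]
              simp [smul_eq_mul, mul_comm] }, fun a => ?_⟩
  show snd (F (algebraMap A B a)) = d a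
  rw [hFA, hf0snd]

theorem exists_derivation_ne_zero {k K : Type*} [Field k] [Field K] [Algebra k K] [CharZero k]
    {x : K} (hx : Transcendental k x) : ∃ D : Derivation k K K, D x ≠ 0 := by
  classical
  have hxind : AlgebraicIndependent k ((↑) : ({x} : Set K) → K) := by
    rw [algebraicIndependent_unique_type_iff]
    simpa using hx
  obtain ⟨s, hxs, hmax⟩ :=
    exists_maximal_algebraicIndependent {x} Set.univ (Set.subset_univ _) hxind
  have hs : IsTranscendenceBasis k ((↑) : s → K) := by
    refine ⟨hmax.prop.1, fun t ht hst => ?_⟩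
    simp only [Subtype.range_coe_subtype, Set.setOf_mem_eq] at *
    exact hmax.eq_of_le ⟨ht, Set.subset_univ _⟩ hst
  have hxmem : x ∈ s := hxs rfl
  set x0 : s := ⟨x, hxmem⟩ with hx0
  set A : Subalgebra k K := Algebra.adjoin k (Set.range ((↑) : s → K)) with hA
  set L : IntermediateField k K := IntermediateField.adjoin k (Set.range ((↑) : s → K)) with hL
  have hAL : A ≤ L.toSubalgebra := IntermediateField.algebra_adjoin_le_adjoin k _
  letI : Algebra A L := (Subalgebra.inclusion hAL).toRingHom.toAlgebra
  have halgAL : ∀ a : A, (algebraMap A L a : K) = (a : K) := fun a => rfl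
  haveI : IsScalarTower A L K := IsScalarTower.of_algebraMap_eq fun a => rfl
  have hinj : Function.Injective (algebraMap A L) := fun a b h => by
    apply Subtype.ext
    have := congrArg (Subtype.val) h
    rwa [halgAL, halgAL] at this
  -- L is the fraction field of A
  haveI : IsLocalization (nonZeroDivisors A) L := by
    constructor
    constructor
    · rintro ⟨b, hb⟩
      refine isUnit_iff_ne_zero.mpr fun h => ?_
      have hb0 : b ≠ 0 := nonZeroDivisors.ne_zero hb
      exact hb0 (hinj (by rw [h, map_zero]))
    · rintro z
      obtain ⟨r, q, hz⟩ := (IntermediateField.mem_adjoin_range_iff k ((↑) : s → K) (z : K)).mp z.2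
      by_cases hq : MvPolynomial.aeval ((↑) : s → K) q = 0
      · refine ⟨⟨0, 1⟩, ?_⟩
        apply Subtype.ext
        push_cast
        rw [mul_one, hz, hq, div_zero]
      · have har : MvPolynomial.aeval ((↑) : s → K) r ∈ A := by
          rw [hA, Algebra.adjoin_range_eq_range_aeval]
          exact ⟨r, rfl⟩
        have haq : MvPolynomial.aeval ((↑) : s → K) q ∈ A := by
          rw [hA, Algebra.adjoin_range_eq_range_aeval]
          exact ⟨q, rfl⟩
        have hbne : (⟨_, haq⟩ : A) ≠ 0 := by
          intro h
          exact hq (congrArg Subtype.val h)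
        refine ⟨⟨⟨_, har⟩, ⟨⟨_, haq⟩, mem_nonZeroDivisors_of_ne_zero hbne⟩⟩, ?_⟩
        apply Subtype.ext
        show ((z * algebraMap A L _ : L) : K) = ((algebraMap A L _ : L) : K)
        push_cast
        rw [halgAL, halgAL]
        show (z : K) * MvPolynomial.aeval ((↑) : s → K) q = MvPolynomial.aeval ((↑) : s → K) r
        rw [hz, div_mul_cancel₀ _ hq]
    · intro a b h
      exact ⟨1, by rw [hinj h]⟩
  haveI : Algebra.FormallyEtale A L := Algebra.FormallyEtale.of_isLocalization (nonZeroDivisors A)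
  haveI : CharZero L := charZero_of_injective_algebraMap (algebraMap k L).injective
  haveI : Algebra.IsAlgebraic L K := hs.isAlgebraic_field
  haveI : Algebra.IsIntegral L K := Algebra.IsAlgebraic.isIntegral
  haveI : Algebra.IsSeparable L K := Algebra.IsSeparable.of_integral L K
  haveI : Algebra.FormallyEtale L K := Algebra.FormallyEtale.of_isSeparable L K
  haveI : Algebra.FormallyEtale A K := Algebra.FormallyEtale.comp A L K
  haveI : Algebra.FormallySmooth A K := inferInstance
  -- the partial-derivative derivation on A
  set e : MvPolynomial s k ≃ₐ[k] A := hs.1.aevalEquiv with he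
  have hvalcoe : ∀ p : MvPolynomial s k, ((e p : A) : K) = MvPolynomial.aeval ((↑) : s → K) p :=
    fun p => hs.1.algebraMap_aevalEquiv p
  have hval : ∀ a : A, MvPolynomial.aeval ((↑) : s → K) (e.symm a) = (a : K) := fun a => by
    conv_rhs => rw [← e.apply_symm_apply a]
    rw [hvalcoe]
  have halgA : ∀ a : A, algebraMap A K a = (a : K) := fun a => rfl
  let dfun : A →ₗ[k] K := (MvPolynomial.aeval ((↑) : s → K)).toLinearMap ∘ₗ
      (MvPolynomial.pderiv (R := k) x0) ∘ₗ e.symm.toLinearMap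
  have hdfun : ∀ a : A,
      dfun a = MvPolynomial.aeval ((↑) : s → K) (MvPolynomial.pderiv x0 (e.symm a)) :=
    fun a => rfl
  let dA : Derivation k A K :=
    { toLinearMap := dfun
      map_one_eq_zero' := by
        show dfun 1 = 0
        rw [hdfun, map_one, MvPolynomial.pderiv_one, map_zero]
      leibniz' := fun a b => by
        show dfun (a * b) = a • dfun b + b • dfun a
        rw [hdfun, hdfun, hdfun, map_mul, MvPolynomial.pderiv_mul, map_add, map_mul, map_mul,
          hval, hval, Algebra.smul_def, Algebra.smul_def, halgA, halgA]
        ring }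
  have hxA : x ∈ A := Algebra.subset_adjoin ⟨x0, rfl⟩
  have hesymm : e.symm ⟨x, hxA⟩ = MvPolynomial.X x0 := by
    rw [AlgEquiv.symm_apply_eq]
    apply Subtype.ext
    rw [hvalcoe, MvPolynomial.aeval_X]
  have hdAx : dA ⟨x, hxA⟩ = 1 := by
    show dfun ⟨x, hxA⟩ = 1
    rw [hdfun, hesymm, MvPolynomial.pderiv_X_self, map_one]
  obtain ⟨D, hD⟩ := Derivation.exists_extend dA
  refine ⟨D, ?_⟩
  have hDx : D x = 1 := by
    have h1 := hD ⟨x, hxA⟩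
    rw [halgA] at h1
    rw [h1, hdAx]
  rw [hDx]
  exact one_ne_zero

/-- Let `k` be a field of characteristic zero and `K/k` a field
extension. For `x ∈ K`, the Kähler differential `dx` vanishes in `Ω¹_{K|k}` if and only
if `x` is algebraic over `k`. -/
theorem kaehler_D_eq_zero_iff_isAlgebraic
    (k K : Type*) [Field k] [CharZero k] [Field K] [Algebra k K] (x : K) :
    KaehlerDifferential.D k K x = 0 ↔ IsAlgebraic k x := by
  constructor
  · intro h
    by_contra hx
    obtain ⟨D, hD⟩ := exists_derivation_ne_zero (k := k) (K := K) hx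
    apply hD
    rw [← D.liftKaehlerDifferential_comp_D x, h, map_zero]
  · intro hx
    haveI : CharZero K := charZero_of_injective_algebraMap (algebraMap k K).injective
    have hp0 : (minpoly k x) ≠ 0 := minpoly.ne_zero hx.isIntegral
    have haev : Polynomial.aeval x (minpoly k x) = 0 := minpoly.aeval k x
    have hd := (KaehlerDifferential.D k K).map_aeval (minpoly k x) x
    rw [haev, map_zero] at hd
    have hderiv : Polynomial.aeval x (Polynomial.derivative (minpoly k x)) ≠ 0 := by
      intro hzero
      have hdvd := minpoly.dvd k x hzero
      have hne : Polynomial.derivative (minpoly k x) ≠ 0 := by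
        intro h0
        have := Polynomial.natDegree_eq_zero_of_derivative_eq_zero h0
        have h1 := minpoly.natDegree_pos hx.isIntegral
        omega
      have := Polynomial.natDegree_le_of_dvd hdvd hne
      have h2 : (Polynomial.derivative (minpoly k x)).natDegree < (minpoly k x).natDegree := by
        apply Polynomial.natDegree_derivative_lt
        exact (minpoly.natDegree_pos hx.isIntegral).ne'
      omega
    rcases smul_eq_zero.mp hd.symm with h | h
    · exact absurd h hderiv
    · exact h
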